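/- Let α > 0, N ≥ 0 an integer, and f ∈ C¹(ℝ) with f(0) = 0. Then for every u ∈ R_N, ∫_ℝ ∂_x(P_{N+1}(f∘u))(x) u(x) dx = ∫_ℝ f'(u(x)) u(x) u'(x) dx; in particular the truncation of the flux in the spectral scheme does not contribute to the energy balance beyond the exact flux term. -/

import Mathlib

open MeasureTheory Real

/-- Physicists' Hermite polynomial: `ℋ_n(x) = (−1)^n e^{x²} (dⁿ/dxⁿ) e^{−x²}`. -/
noncomputable def physHermite (n : ℕ) : ℝ → ℝ :=
  fun x => (-1 : ℝ) ^ n * Real.exp (x ^ 2) * iteratedDeriv n (fun y => Real.exp (-(y ^ 2))) x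

/-- Generalized Hermite function `H_n^α(x) = (α/(2^n n! √π))^{1/2} ℋ_n(αx) e^{−α²x²/2}`. -/
noncomputable def genHermite (α : ℝ) (n : ℕ) : ℝ → ℝ :=
  fun x => Real.sqrt (α / (2 ^ n * n.factorial * Real.sqrt Real.pi)) *
    physHermite n (α * x) * Real.exp (-(α ^ 2 * x ^ 2) / 2)

/-- Integer-indexed generalized Hermite function, with the convention `H_n^α ≡ 0` for `n < 0`. -/
noncomputable def genHermiteZ (α : ℝ) (n : ℤ) : ℝ → ℝ :=
  fun x => if 0 ≤ n then genHermite α n.toNat x else 0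

/-- The operator `D_x = ∂_x + α² x`. -/
noncomputable def Dx (α : ℝ) (u : ℝ → ℝ) : ℝ → ℝ :=
  fun x => deriv u x + α ^ 2 * x * u x

/-- The Sturm–Liouville operator
`L_α(u)(x) = −e^{α²x²/2} ∂_x(e^{−α²x²} ∂_x(e^{α²x²/2} u(x)))`. -/
noncomputable def SLop (α : ℝ) (u : ℝ → ℝ) : ℝ → ℝ :=
  fun x => -(Real.exp (α ^ 2 * x ^ 2 / 2) *
    deriv (fun y => Real.exp (-(α ^ 2 * y ^ 2)) *
      deriv (fun z => Real.exp (α ^ 2 * z ^ 2 / 2) * u z) y) x)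



open Filter

noncomputable def Hpoly : ℕ → Polynomial ℝ
  | 0 => 1
  | n + 1 => Polynomial.C 2 * (Polynomial.X * Hpoly n) - (Hpoly n).derivative

lemma Hpoly_derivative (n : ℕ) :
    (Hpoly (n + 1)).derivative = Polynomial.C (2 * (n + 1) : ℝ) * Hpoly n := by
  induction n with
  | zero => simp [Hpoly]
  | succ n ih =>
    have hH : Hpoly (n + 1) = Polynomial.C 2 * (Polynomial.X * Hpoly n) - (Hpoly n).derivative := rfl
    show (Polynomial.C 2 * (Polynomial.X * Hpoly (n+1)) - (Hpoly (n+1)).derivative).derivative = _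
    rw [Polynomial.derivative_sub, Polynomial.derivative_C_mul, Polynomial.derivative_mul,
      Polynomial.derivative_X, ih, hH]
    push_cast
    rw [show Polynomial.C (2*((n:ℝ)+1)) = Polynomial.C 2 * Polynomial.C ((n:ℝ)+1) by
        rw [← Polynomial.C_mul],
      show Polynomial.C (2*((n:ℝ)+1+1)) = Polynomial.C 2 * Polynomial.C ((n:ℝ)+1) + Polynomial.C 2 by
        rw [← Polynomial.C_mul, ← Polynomial.C_add]; congr 1; ring]
    simp only [Polynomial.derivative_mul, Polynomial.derivative_C, Polynomial.derivative_C_mul,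
      zero_mul, mul_zero, zero_add, add_zero]
    ring

-- gauss derivative helper
lemma hasDerivAt_polyGauss (P : Polynomial ℝ) (x : ℝ) :
    HasDerivAt (fun y => P.eval y * Real.exp (-(y ^ 2)))
      ((P.derivative.eval x - 2 * x * P.eval x) * Real.exp (-(x ^ 2))) x := by
  have h1 : HasDerivAt (fun y : ℝ => P.eval y) (P.derivative.eval x) x := P.hasDerivAt x
  have h2 : HasDerivAt (fun y : ℝ => Real.exp (-(y ^ 2))) (-(2*x) * Real.exp (-(x ^ 2))) x := by
    have h0 : HasDerivAt (fun y : ℝ => -(y ^ 2)) (-(2*x)) x := by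
      exact ((hasDerivAt_pow 2 x).neg).congr_deriv (by norm_num)
    convert h0.exp using 1
    ring
  refine (h1.mul h2).congr_deriv ?_
  ring

lemma iteratedDeriv_gauss (n : ℕ) :
    iteratedDeriv n (fun y => Real.exp (-(y ^ 2)))
      = fun x => (-1 : ℝ) ^ n * ((Hpoly n).eval x * Real.exp (-(x ^ 2))) := by
  induction n with
  | zero => funext x; simp [Hpoly]
  | succ n ih =>
    rw [iteratedDeriv_succ, ih]
    funext x
    have h : HasDerivAt (fun y => (-1 : ℝ) ^ n * ((Hpoly n).eval y * Real.exp (-(y ^ 2))))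
        ((-1 : ℝ) ^ n * (((Hpoly n).derivative.eval x - 2 * x * (Hpoly n).eval x) * Real.exp (-(x ^ 2)))) x :=
      (hasDerivAt_polyGauss (Hpoly n) x).const_mul _
    rw [h.deriv]
    have : Hpoly (n + 1) = Polynomial.C 2 * (Polynomial.X * Hpoly n) - (Hpoly n).derivative := rfl
    rw [this]
    simp only [Polynomial.eval_sub, Polynomial.eval_mul, Polynomial.eval_C, Polynomial.eval_X]
    ring

lemma physHermite_eq (n : ℕ) (x : ℝ) : physHermite n x = (Hpoly n).eval x := by
  rw [physHermite, iteratedDeriv_gauss]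
  have h1 : (-1 : ℝ) ^ n * (-1 : ℝ) ^ n = 1 := by
    rw [← mul_pow]; norm_num
  have h2 : Real.exp (x ^ 2) * Real.exp (-(x ^ 2)) = 1 := by
    rw [← Real.exp_add]; simp
  calc (-1 : ℝ) ^ n * Real.exp (x ^ 2) * ((-1 : ℝ) ^ n * ((Hpoly n).eval x * Real.exp (-(x ^ 2))))
      = ((-1 : ℝ) ^ n * (-1 : ℝ) ^ n) * (Real.exp (x ^ 2) * Real.exp (-(x ^ 2))) * (Hpoly n).eval x := by ring
    _ = (Hpoly n).eval x := by rw [h1, h2]; ring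

lemma Hpoly_iterate_self (n : ℕ) :
    Polynomial.derivative^[n] (Hpoly n) = Polynomial.C ((2:ℝ)^n * n.factorial) := by
  induction n with
  | zero => simp [Hpoly]
  | succ n ih =>
    rw [Function.iterate_succ_apply, Hpoly_derivative, Polynomial.iterate_derivative_C_mul, ih,
      ← Polynomial.C_mul]
    congr 1
    push_cast [Nat.factorial_succ]
    ring

lemma Hpoly_iterate_zero (n m : ℕ) (h : n < m) :
    Polynomial.derivative^[m] (Hpoly n) = 0 := by
  obtain ⟨k, rfl⟩ : ∃ k, m = k + (n + 1) := ⟨m - (n+1), by omega⟩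
  rw [Function.iterate_add_apply, Function.iterate_succ_apply', Hpoly_iterate_self,
    Polynomial.derivative_C, Polynomial.iterate_derivative_zero]

lemma pow_mul_gauss_le (b : ℝ) (hb : 0 < b) (n : ℕ) (x : ℝ) :
    |x| ^ n * Real.exp (-(b * x ^ 2)) ≤
      Real.sqrt (n.factorial / b ^ n) * Real.exp (-(b * x ^ 2) / 2) := by
  have hE : Real.exp (-(b * x ^ 2)) = Real.exp (-(b * x ^ 2) / 2) * Real.exp (-(b * x ^ 2) / 2) := by
    rw [← Real.exp_add]; ring_nf
  have h1 : |x| ^ n * Real.exp (-(b * x ^ 2) / 2) ≤ Real.sqrt (n.factorial / b ^ n) := by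
    rw [← Real.sqrt_sq (by positivity : (0:ℝ) ≤ |x| ^ n * Real.exp (-(b * x ^ 2) / 2))]
    apply Real.sqrt_le_sqrt
    have key : (b * x ^ 2) ^ n / n.factorial ≤ Real.exp (b * x ^ 2) :=
      Real.pow_div_factorial_le_exp (x := b * x ^ 2) (by positivity) n
    rw [div_le_iff₀ (by positivity), mul_pow] at key
    have he : (0:ℝ) < Real.exp (b * x ^ 2) := Real.exp_pos _
    have hmul : Real.exp (-(b * x ^ 2)) * Real.exp (b * x ^ 2) = 1 := by
      rw [← Real.exp_add]; simp
    have h2 : Real.exp (-(b * x ^ 2) / 2) ^ 2 = Real.exp (-(b * x ^ 2)) := by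
      rw [← Real.exp_nat_mul]
      push_cast
      ring_nf
    have hsq : (|x| ^ n * Real.exp (-(b * x ^ 2) / 2)) ^ 2
        = (x ^ 2) ^ n * Real.exp (-(b * x ^ 2)) := by
      rw [mul_pow, h2, ← pow_mul, mul_comm n 2, pow_mul, sq_abs]
    rw [hsq, le_div_iff₀ (by positivity : (0:ℝ) < b ^ n)]
    have h3 : b ^ n * ((x ^ 2) ^ n * Real.exp (-(b * x ^ 2))) ≤ (n.factorial : ℝ) := by
      calc b ^ n * ((x ^ 2) ^ n * Real.exp (-(b * x ^ 2)))
          = (b ^ n * (x ^ 2) ^ n) * Real.exp (-(b * x ^ 2)) := by ring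
        _ ≤ (Real.exp (b * x ^ 2) * n.factorial) * Real.exp (-(b * x ^ 2)) := by
            exact mul_le_mul_of_nonneg_right key (Real.exp_pos _).le
        _ = (n.factorial : ℝ) * (Real.exp (-(b * x ^ 2)) * Real.exp (b * x ^ 2)) := by ring
        _ = (n.factorial : ℝ) := by rw [hmul, mul_one]
    calc (x ^ 2) ^ n * Real.exp (-(b * x ^ 2)) * b ^ n
        = b ^ n * ((x ^ 2) ^ n * Real.exp (-(b * x ^ 2))) := by ring
      _ ≤ (n.factorial : ℝ) := h3
  calc |x| ^ n * Real.exp (-(b * x ^ 2))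
      = (|x| ^ n * Real.exp (-(b * x ^ 2) / 2)) * Real.exp (-(b * x ^ 2) / 2) := by rw [hE]; ring
    _ ≤ Real.sqrt (n.factorial / b ^ n) * Real.exp (-(b * x ^ 2) / 2) := by
        apply mul_le_mul_of_nonneg_right h1 (Real.exp_pos _).le

lemma integrable_pow_gauss (b : ℝ) (hb : 0 < b) (n : ℕ) :
    Integrable fun x : ℝ => x ^ n * Real.exp (-(b * x ^ 2)) := by
  apply Integrable.mono'
    (g := fun x => Real.sqrt (n.factorial / b ^ n) * Real.exp (-(b / 2) * x ^ 2))
  · exact (integrable_exp_neg_mul_sq (by linarith)).const_mul _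
  · exact (Continuous.mul (continuous_pow n) (by fun_prop)).aestronglyMeasurable
  · refine ae_of_all _ fun x => ?_
    have := pow_mul_gauss_le b hb n x
    rw [Real.norm_eq_abs, abs_mul, abs_pow, abs_of_nonneg (Real.exp_pos _).le]
    calc |x| ^ n * Real.exp (-(b * x ^ 2))
        ≤ Real.sqrt (n.factorial / b ^ n) * Real.exp (-(b * x ^ 2) / 2) := this
      _ = Real.sqrt (n.factorial / b ^ n) * Real.exp (-(b / 2) * x ^ 2) := by ring_nf

lemma integrable_polyGauss (b : ℝ) (hb : 0 < b) (P : Polynomial ℝ) :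
    Integrable fun x : ℝ => P.eval x * Real.exp (-(b * x ^ 2)) := by
  have h := integrable_finset_sum (Finset.range (P.natDegree + 1))
    (fun i _ => ((integrable_pow_gauss b hb i).const_mul (P.coeff i)))
  apply h.congr
  refine ae_of_all _ fun x => ?_
  show _ = Polynomial.eval x P * Real.exp (-(b * x ^ 2))
  rw [Polynomial.eval_eq_sum_range, Finset.sum_mul]
  exact Finset.sum_congr rfl fun i _ => by ring

lemma bound_polyGauss (b : ℝ) (hb : 0 < b) (P : Polynomial ℝ) :
    ∃ C, ∀ x : ℝ, |P.eval x * Real.exp (-(b * x ^ 2))| ≤ C := by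
  refine ⟨∑ i ∈ Finset.range (P.natDegree + 1), |P.coeff i| * Real.sqrt (i.factorial / b ^ i),
    fun x => ?_⟩
  have habs : |P.eval x| ≤ ∑ i ∈ Finset.range (P.natDegree + 1), |P.coeff i| * |x| ^ i := by
    rw [Polynomial.eval_eq_sum_range]
    refine (Finset.abs_sum_le_sum_abs _ _).trans ?_
    refine Finset.sum_le_sum fun i _ => ?_
    rw [abs_mul, abs_pow]
  rw [abs_mul, abs_of_nonneg (Real.exp_pos _).le]
  calc |P.eval x| * Real.exp (-(b * x ^ 2))
      ≤ (∑ i ∈ Finset.range (P.natDegree + 1), |P.coeff i| * |x| ^ i) * Real.exp (-(b * x ^ 2)) :=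
        mul_le_mul_of_nonneg_right habs (Real.exp_pos _).le
    _ = ∑ i ∈ Finset.range (P.natDegree + 1), |P.coeff i| * (|x| ^ i * Real.exp (-(b * x ^ 2))) := by
        rw [Finset.sum_mul]; exact Finset.sum_congr rfl fun i _ => by ring
    _ ≤ ∑ i ∈ Finset.range (P.natDegree + 1), |P.coeff i| * Real.sqrt (i.factorial / b ^ i) := by
        refine Finset.sum_le_sum fun i _ => ?_
        refine mul_le_mul_of_nonneg_left ?_ (abs_nonneg _)
        calc |x| ^ i * Real.exp (-(b * x ^ 2))
            ≤ Real.sqrt (i.factorial / b ^ i) * Real.exp (-(b * x ^ 2) / 2) :=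
              pow_mul_gauss_le b hb i x
          _ ≤ Real.sqrt (i.factorial / b ^ i) * 1 := by
              refine mul_le_mul_of_nonneg_left ?_ (Real.sqrt_nonneg _)
              rw [Real.exp_le_one_iff]
              nlinarith [sq_nonneg x, hb]
          _ = Real.sqrt (i.factorial / b ^ i) := mul_one _

lemma integrable_polyGauss' (P : Polynomial ℝ) :
    Integrable fun x : ℝ => P.eval x * Real.exp (-(x ^ 2)) := by
  have := integrable_polyGauss 1 one_pos P
  simpa using this

lemma hasDerivAt_iteratedDeriv_gauss (m : ℕ) (x : ℝ) :
    HasDerivAt (iteratedDeriv m (fun y => Real.exp (-(y ^ 2))))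
      (iteratedDeriv (m + 1) (fun y => Real.exp (-(y ^ 2))) x) x := by
  rw [iteratedDeriv_gauss m, iteratedDeriv_gauss (m + 1)]
  have h := (hasDerivAt_polyGauss (Hpoly m) x).const_mul ((-1 : ℝ) ^ m)
  refine h.congr_deriv ?_
  rw [show Hpoly (m + 1) = Polynomial.C 2 * (Polynomial.X * Hpoly m) - (Hpoly m).derivative
    from rfl]
  simp only [Polynomial.eval_sub, Polynomial.eval_mul, Polynomial.eval_C, Polynomial.eval_X,
    pow_succ]
  ring

lemma parts_polyGauss (P : Polynomial ℝ) (m : ℕ) :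
    ∫ x : ℝ, P.eval x * iteratedDeriv (m + 1) (fun y => Real.exp (-(y ^ 2))) x
      = - ∫ x : ℝ, P.derivative.eval x * iteratedDeriv m (fun y => Real.exp (-(y ^ 2))) x := by
  have hint : ∀ (Q : Polynomial ℝ) (k : ℕ),
      Integrable fun x : ℝ => Q.eval x * iteratedDeriv k (fun y => Real.exp (-(y ^ 2))) x := by
    intro Q k
    rw [iteratedDeriv_gauss k]
    have := (integrable_polyGauss' (Q * Hpoly k)).const_mul ((-1 : ℝ) ^ k)
    apply this.congr
    refine ae_of_all _ fun x => ?_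
    simp only [Polynomial.eval_mul]
    ring
  exact integral_mul_deriv_eq_deriv_mul_of_integrable
    (fun x _ => P.hasDerivAt x) (fun x _ => hasDerivAt_iteratedDeriv_gauss m x)
    (hint P (m + 1)) (hint P.derivative m) (hint P m)

lemma integral_poly_mul_iteratedDeriv_gauss (m : ℕ) (P : Polynomial ℝ) :
    ∫ x : ℝ, P.eval x * iteratedDeriv m (fun y => Real.exp (-(y ^ 2))) x
      = (-1 : ℝ) ^ m * ∫ x : ℝ, (Polynomial.derivative^[m] P).eval x * Real.exp (-(x ^ 2)) := by
  induction m generalizing P with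
  | zero => simp [iteratedDeriv_zero]
  | succ m ih =>
    rw [parts_polyGauss P m, ih P.derivative, ← Function.iterate_succ_apply]
    ring

lemma integral_gauss' : ∫ x : ℝ, Real.exp (-(x ^ 2)) = Real.sqrt Real.pi := by
  have h := integral_gaussian 1
  simpa using h

lemma Hpoly_inner (n m : ℕ) :
    ∫ x : ℝ, (Hpoly n).eval x * (Hpoly m).eval x * Real.exp (-(x ^ 2))
      = ∫ x : ℝ, (Polynomial.derivative^[m] (Hpoly n)).eval x * Real.exp (-(x ^ 2)) := by
  have hsq : (-1 : ℝ) ^ m * (-1 : ℝ) ^ m = 1 := by rw [← mul_pow]; norm_num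
  have h1 : ∀ x : ℝ, (Hpoly n).eval x * (Hpoly m).eval x * Real.exp (-(x ^ 2))
      = (-1 : ℝ) ^ m * ((Hpoly n).eval x * iteratedDeriv m (fun y => Real.exp (-(y ^ 2))) x) := by
    intro x
    rw [iteratedDeriv_gauss m]
    calc (Hpoly n).eval x * (Hpoly m).eval x * Real.exp (-(x ^ 2))
        = ((-1 : ℝ) ^ m * (-1 : ℝ) ^ m) *
            ((Hpoly n).eval x * (Hpoly m).eval x * Real.exp (-(x ^ 2))) := by rw [hsq, one_mul]
      _ = (-1 : ℝ) ^ m *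
          ((Hpoly n).eval x * ((-1 : ℝ) ^ m * ((Hpoly m).eval x * Real.exp (-(x ^ 2))))) := by ring
  simp_rw [h1]
  rw [integral_const_mul, integral_poly_mul_iteratedDeriv_gauss, ← mul_assoc, hsq,
    one_mul]

lemma Hpoly_ortho (n m : ℕ) :
    ∫ x : ℝ, (Hpoly n).eval x * (Hpoly m).eval x * Real.exp (-(x ^ 2))
      = if n = m then (2 : ℝ) ^ n * n.factorial * Real.sqrt Real.pi else 0 := by
  by_cases h : n = m
  · subst h
    rw [if_pos rfl, Hpoly_inner, Hpoly_iterate_self]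
    simp only [Polynomial.eval_C]
    rw [integral_const_mul, integral_gauss']
  · rw [if_neg h]
    rcases Nat.lt_or_ge n m with hlt | hge
    · rw [Hpoly_inner, Hpoly_iterate_zero n m hlt]
      simp
    · have hlt : m < n := by omega
      have hcomm : ∀ x : ℝ, (Hpoly n).eval x * (Hpoly m).eval x * Real.exp (-(x ^ 2))
          = (Hpoly m).eval x * (Hpoly n).eval x * Real.exp (-(x ^ 2)) := fun x => by ring
      simp_rw [hcomm]
      rw [Hpoly_inner, Hpoly_iterate_zero m n hlt]
      simp



noncomputable def gC (α : ℝ) (n : ℕ) : ℝ :=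
  Real.sqrt (α / (2 ^ n * n.factorial * Real.sqrt Real.pi))

lemma genHermite_eq (α : ℝ) (n : ℕ) (x : ℝ) :
    genHermite α n x = gC α n * (Hpoly n).eval (α * x) * Real.exp (-(α ^ 2 * x ^ 2) / 2) := by
  rw [genHermite, physHermite_eq, gC]

lemma sqrt_pi_pos : (0:ℝ) < Real.sqrt Real.pi := Real.sqrt_pos.mpr Real.pi_pos

lemma gC_pos (α : ℝ) (hα : 0 < α) (n : ℕ) : 0 < gC α n := by
  apply Real.sqrt_pos.mpr
  have := sqrt_pi_pos
  have h1 : (0:ℝ) < (n.factorial : ℝ) := by exact_mod_cast n.factorial_pos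
  positivity

lemma gC_half (α : ℝ) (hα : 0 < α) (n : ℕ) :
    Real.sqrt (((n:ℝ) + 1) / 2) * gC α (n + 1) = gC α n / 2 := by
  have hπ := sqrt_pi_pos
  have hfac : (0:ℝ) < (n.factorial : ℝ) := by exact_mod_cast n.factorial_pos
  have h4 : Real.sqrt 4 = 2 := by
    rw [show (4:ℝ) = 2 ^ 2 by norm_num, Real.sqrt_sq (by norm_num : (0:ℝ) ≤ 2)]
  rw [gC, gC, ← Real.sqrt_mul (x := ((n:ℝ) + 1) / 2) (by positivity)
    (α / (2 ^ (n+1) * ((n+1).factorial : ℝ) * Real.sqrt Real.pi))]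
  rw [show ((n:ℝ) + 1) / 2 * (α / (2 ^ (n+1) * ((n+1).factorial : ℝ) * Real.sqrt Real.pi))
      = (α / (2 ^ n * (n.factorial : ℝ) * Real.sqrt Real.pi)) / 4 by
    push_cast [Nat.factorial_succ]
    field_simp
    ring]
  rw [Real.sqrt_div' _ (by norm_num : (0:ℝ) ≤ 4), h4]

lemma gC_succ_mul (α : ℝ) (hα : 0 < α) (n : ℕ) :
    ((n:ℝ) + 1) * gC α (n + 1) = Real.sqrt (((n:ℝ) + 1) / 2) * gC α n := by
  have hs : Real.sqrt (((n:ℝ) + 1) / 2) * Real.sqrt (((n:ℝ) + 1) / 2) = ((n:ℝ) + 1) / 2 :=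
    Real.mul_self_sqrt (by positivity)
  calc ((n:ℝ) + 1) * gC α (n + 1)
      = 2 * (Real.sqrt (((n:ℝ) + 1) / 2) * Real.sqrt (((n:ℝ) + 1) / 2)) * gC α (n + 1) := by
        rw [hs]; ring
    _ = 2 * Real.sqrt (((n:ℝ) + 1) / 2) * (Real.sqrt (((n:ℝ) + 1) / 2) * gC α (n + 1)) := by ring
    _ = 2 * Real.sqrt (((n:ℝ) + 1) / 2) * (gC α n / 2) := by rw [gC_half α hα n]
    _ = Real.sqrt (((n:ℝ) + 1) / 2) * gC α n := by ring

lemma genHermite_ortho (α : ℝ) (hα : 0 < α) (n m : ℕ) :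
    ∫ x : ℝ, genHermite α n x * genHermite α m x = if n = m then 1 else 0 := by
  have hπ := sqrt_pi_pos
  have h1 : ∀ x : ℝ, genHermite α n x * genHermite α m x
      = (gC α n * gC α m) *
        ((fun y => (Hpoly n).eval y * (Hpoly m).eval y * Real.exp (-(y ^ 2))) (α * x)) := by
    intro x
    have hE : Real.exp (-(α ^ 2 * x ^ 2) / 2) * Real.exp (-(α ^ 2 * x ^ 2) / 2)
        = Real.exp (-((α * x) ^ 2)) := by
      rw [← Real.exp_add]; congr 1; ring
    simp only [genHermite_eq]
    calc gC α n * (Hpoly n).eval (α * x) * Real.exp (-(α ^ 2 * x ^ 2) / 2) *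
          (gC α m * (Hpoly m).eval (α * x) * Real.exp (-(α ^ 2 * x ^ 2) / 2))
        = (gC α n * gC α m) * ((Hpoly n).eval (α * x) * (Hpoly m).eval (α * x) *
            (Real.exp (-(α ^ 2 * x ^ 2) / 2) * Real.exp (-(α ^ 2 * x ^ 2) / 2))) := by ring
      _ = _ := by rw [hE]
  simp_rw [h1]
  rw [integral_const_mul, MeasureTheory.Measure.integral_comp_mul_left
    (fun y => (Hpoly n).eval y * (Hpoly m).eval y * Real.exp (-(y ^ 2))) α, Hpoly_ortho]
  by_cases h : n = m
  · subst h
    rw [if_pos rfl, if_pos rfl]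
    have hgc : gC α n * gC α n = α / (2 ^ n * n.factorial * Real.sqrt Real.pi) :=
      Real.mul_self_sqrt (by
        have hfac : (0:ℝ) < (n.factorial : ℝ) := by exact_mod_cast n.factorial_pos
        positivity)
    rw [smul_eq_mul, hgc, abs_of_pos (inv_pos.mpr hα)]
    have hfac : (0:ℝ) < (n.factorial : ℝ) := by exact_mod_cast n.factorial_pos
    field_simp
  · simp only [if_neg h]
    simp

lemma Hpoly_derivative' (n : ℕ) :
    (Hpoly n).derivative = Polynomial.C (2 * (n:ℝ)) * Hpoly (n - 1) := by
  cases n with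
  | zero => simp [Hpoly]
  | succ n => rw [Hpoly_derivative]; push_cast; norm_num

lemma hasDerivAt_genHermite (α : ℝ) (hα : 0 < α) (n : ℕ) (x : ℝ) :
    HasDerivAt (genHermite α n)
      (α * (Real.sqrt ((n:ℝ) / 2) * genHermite α (n - 1) x
        - Real.sqrt (((n:ℝ) + 1) / 2) * genHermite α (n + 1) x)) x := by
  have hgen : genHermite α n = fun x =>
      gC α n * (Hpoly n).eval (α * x) * Real.exp (-(α ^ 2 * x ^ 2) / 2) := by
    funext y; rw [genHermite_eq]
  rw [hgen]
  have h1 : HasDerivAt (fun x : ℝ => (Hpoly n).eval (α * x))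
      (α * (Hpoly n).derivative.eval (α * x)) x := by
    have hin : HasDerivAt (fun x : ℝ => α * x) α x := by
      simpa using (hasDerivAt_id x).const_mul α
    have := ((Hpoly n).hasDerivAt (α * x)).comp x hin
    simpa [mul_comm, Function.comp_def] using this
  have h2 : HasDerivAt (fun x : ℝ => Real.exp (-(α ^ 2 * x ^ 2) / 2))
      (-(α ^ 2 * x) * Real.exp (-(α ^ 2 * x ^ 2) / 2)) x := by
    have hin : HasDerivAt (fun x : ℝ => -(α ^ 2 * x ^ 2) / 2) (-(α ^ 2 * x)) x := by
      have := (((hasDerivAt_pow 2 x).const_mul (α ^ 2)).neg).div_const 2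
      refine this.congr_deriv ?_
      ring
    convert hin.exp using 1
    ring
  have h3 := (h1.const_mul (gC α n)).mul h2
  refine h3.congr_deriv ?_
  symm
  have hy : ∀ m : ℕ, (Hpoly (m+1)).eval (α * x)
      = 2 * (α * x) * (Hpoly m).eval (α * x) - (Hpoly m).derivative.eval (α * x) := by
    intro m
    rw [show Hpoly (m + 1) = Polynomial.C 2 * (Polynomial.X * Hpoly m) - (Hpoly m).derivative
      from rfl]
    simp only [Polynomial.eval_sub, Polynomial.eval_mul, Polynomial.eval_C, Polynomial.eval_X]
    ring
  set E := Real.exp (-(α ^ 2 * x ^ 2) / 2) with hE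
  cases n with
  | zero =>
    have hc : Real.sqrt (((0:ℕ):ℝ) / 2) = 0 := by norm_num
    have hc1 : Real.sqrt (((0:ℝ) + 1) / 2) * gC α 1 = gC α 0 / 2 := by
      have := gC_half α hα 0
      simpa using this
    have hH1 : (Hpoly 1).eval (α * x) = 2 * (α * x) := by
      have := hy 0
      simpa [Hpoly] using this
    have hd0 : (Hpoly 0).derivative.eval (α * x) = 0 := by simp [Hpoly]
    have hP0 : (Hpoly 0).eval (α * x) = 1 := by simp [Hpoly]
    simp only [genHermite_eq, Nat.cast_zero, hH1, hd0, hP0, ← hE] at *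
    push_cast
    rw [show Real.sqrt ((0:ℝ)/2) = 0 by norm_num]
    linear_combination (-(2 * α ^ 2 * x * E)) * hc1
  | succ n =>
    have hc1 := gC_half α hα (n + 1)
    have hc2 := gC_succ_mul α hα n
    have hd : (Hpoly (n+1)).derivative.eval (α * x) = 2 * ((n:ℝ) + 1) * (Hpoly n).eval (α * x) := by
      rw [Hpoly_derivative]
      simp only [Polynomial.eval_mul, Polynomial.eval_C]
    have hP2 : (Hpoly (n+2)).eval (α * x)
        = 2 * (α * x) * (Hpoly (n+1)).eval (α * x) - 2 * ((n:ℝ) + 1) * (Hpoly n).eval (α * x) := by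
      rw [hy (n+1), hd]
    simp only [genHermite_eq, Nat.add_sub_cancel, ← hE]
    rw [hd, hP2]
    push_cast at hc1 hc2 ⊢
    linear_combination (-(α * (Hpoly n).eval (α * x) * E)) * hc2
      - (α * (2 * α * x * (Hpoly (n+1)).eval (α * x) - 2 * ((n:ℝ) + 1) * (Hpoly n).eval (α * x)) * E) * hc1





noncomputable def HpolyS (α : ℝ) (n : ℕ) : Polynomial ℝ :=
  (Hpoly n).comp (Polynomial.C α * Polynomial.X)

lemma HpolyS_eval (α : ℝ) (n : ℕ) (x : ℝ) : (HpolyS α n).eval x = (Hpoly n).eval (α * x) := by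
  simp [HpolyS, Polynomial.eval_comp]

lemma genHermite_eq' (α : ℝ) (n : ℕ) (x : ℝ) :
    genHermite α n x = gC α n * ((HpolyS α n).eval x * Real.exp (-(α ^ 2 / 2 * x ^ 2))) := by
  rw [genHermite_eq, HpolyS_eval, show -(α ^ 2 * x ^ 2) / 2 = -(α ^ 2 / 2 * x ^ 2) by ring]
  ring

lemma integrable_genHermite (α : ℝ) (hα : 0 < α) (n : ℕ) : Integrable (genHermite α n) := by
  have h := (integrable_polyGauss (α ^ 2 / 2) (by positivity) (HpolyS α n)).const_mul (gC α n)
  apply h.congr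
  exact ae_of_all _ fun x => (genHermite_eq' α n x).symm

lemma integrable_genHermite_mul (α : ℝ) (hα : 0 < α) (n m : ℕ) :
    Integrable fun x => genHermite α n x * genHermite α m x := by
  have h := (integrable_polyGauss (α ^ 2) (by positivity)
    (HpolyS α n * HpolyS α m)).const_mul (gC α n * gC α m)
  apply h.congr
  refine ae_of_all _ fun x => ?_
  show gC α n * gC α m * ((HpolyS α n * HpolyS α m).eval x * Real.exp (-(α ^ 2 * x ^ 2)))
      = genHermite α n x * genHermite α m x
  rw [Polynomial.eval_mul, genHermite_eq' α n x, genHermite_eq' α m x]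
  rw [show -(α ^ 2 * x ^ 2) = -(α ^ 2 / 2 * x ^ 2) + -(α ^ 2 / 2 * x ^ 2) by ring, Real.exp_add]
  ring

lemma bounded_genHermite (α : ℝ) (hα : 0 < α) (n : ℕ) : ∃ C, ∀ x, |genHermite α n x| ≤ C := by
  obtain ⟨C, hC⟩ := bound_polyGauss (α ^ 2 / 2) (by positivity) (HpolyS α n)
  refine ⟨|gC α n| * C, fun x => ?_⟩
  rw [genHermite_eq', abs_mul]
  exact mul_le_mul_of_nonneg_left (hC x) (abs_nonneg _)

lemma continuous_genHermite (α : ℝ) (n : ℕ) : Continuous (genHermite α n) := by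
  have : genHermite α n = fun x => gC α n * ((HpolyS α n).eval x * Real.exp (-(α ^ 2 / 2 * x ^ 2))) := by
    funext x; exact genHermite_eq' α n x
  rw [this]
  fun_prop

/-- for `u ∈ R_N` and `f ∈ C¹(ℝ)` with `f(0) = 0`, the truncated flux term
satisfies `∫ ∂_x(P_{N+1}(f∘u)) u dx = ∫ f'(u) u u' dx`. -/
theorem flux_truncation (α : ℝ) (hα : 0 < α) (N : ℕ) (f : ℝ → ℝ)
    (hf : ContDiff ℝ 1 f) (hf0 : f 0 = 0) (c : ℕ → ℝ) (u : ℝ → ℝ)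
    (hu : u = fun x => ∑ k ∈ Finset.range (N + 1), c k * genHermite α k x) :
    ∫ x : ℝ, deriv (fun z => ∑ n ∈ Finset.range (N + 2),
        (∫ y : ℝ, f (u y) * genHermite α n y) * genHermite α n z) x * u x
      = ∫ x : ℝ, deriv f (u x) * u x * deriv u x := by
  classical
  have hfc : Continuous f := hf.continuous
  have hf'c : Continuous (deriv f) := hf.continuous_deriv le_rfl
  set dH : ℕ → ℝ → ℝ := fun k x =>
    α * (Real.sqrt ((k : ℝ) / 2) * genHermite α (k - 1) x
      - Real.sqrt (((k : ℝ) + 1) / 2) * genHermite α (k + 1) x) with hdH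
  set G : ℕ → ℝ := fun n => ∫ y : ℝ, f (u y) * genHermite α n y with hG
  set u' : ℝ → ℝ := fun x => ∑ k ∈ Finset.range (N + 1), c k * dH k x with hu'def
  have hu' : ∀ x, HasDerivAt u (u' x) x := by
    intro x
    rw [hu, hu'def]
    exact HasDerivAt.fun_sum fun k _ => ((hasDerivAt_genHermite α hα k x).const_mul (c k))
  have hu_cont : Continuous u := by
    have hd : Differentiable ℝ u := fun x => (hu' x).differentiableAt
    exact hd.continuous
  -- boundedness of u
  obtain ⟨Mu, hMu⟩ : ∃ M, ∀ x, |u x| ≤ M := by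
    have h : ∀ k : ℕ, ∃ C, ∀ x, |c k * genHermite α k x| ≤ C := fun k => by
      obtain ⟨C, hC⟩ := bounded_genHermite α hα k
      exact ⟨|c k| * C, fun x => by
        rw [abs_mul]; exact mul_le_mul_of_nonneg_left (hC x) (abs_nonneg _)⟩
    choose C hC using h
    refine ⟨∑ k ∈ Finset.range (N + 1), C k, fun x => ?_⟩
    rw [hu]
    exact (Finset.abs_sum_le_sum_abs _ _).trans (Finset.sum_le_sum fun k _ => hC k x)
  obtain ⟨Cf, hCf⟩ := isCompact_Icc.exists_bound_of_continuousOn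
    (s := Set.Icc (-Mu) Mu) hfc.continuousOn
  obtain ⟨Cf', hCf'⟩ := isCompact_Icc.exists_bound_of_continuousOn
    (s := Set.Icc (-Mu) Mu) hf'c.continuousOn
  have hmem : ∀ x, u x ∈ Set.Icc (-Mu) Mu := fun x =>
    Set.mem_Icc.mpr ⟨(abs_le.mp (hMu x)).1, (abs_le.mp (hMu x)).2⟩
  have hfub : ∀ x, ‖f (u x)‖ ≤ Cf := fun x => hCf _ (hmem x)
  have hf'ub : ∀ x, ‖deriv f (u x)‖ ≤ Cf' := fun x => hCf' _ (hmem x)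
  -- integrability helpers
  have int_gH : ∀ m : ℕ, Integrable (genHermite α m) := integrable_genHermite α hα
  have int_gHmul : ∀ n m : ℕ, Integrable fun x => genHermite α n x * genHermite α m x :=
    integrable_genHermite_mul α hα
  have int_u : Integrable u := by
    rw [hu]; exact integrable_finset_sum _ fun k _ => (int_gH k).const_mul _
  have hrepr : ∀ m : ℕ, (fun x => genHermite α m x * u x)
      = fun x => ∑ k ∈ Finset.range (N + 1), c k * (genHermite α m x * genHermite α k x) := by
    intro m; funext x; rw [hu, Finset.mul_sum]
    exact Finset.sum_congr rfl fun k _ => by ring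
  have int_u_gH : ∀ m : ℕ, Integrable fun x => genHermite α m x * u x := by
    intro m
    rw [hrepr m]
    exact integrable_finset_sum _ fun k _ => (int_gHmul m k).const_mul _
  have int_fu_gH : ∀ m : ℕ, Integrable fun x => f (u x) * genHermite α m x := fun m =>
    Integrable.bdd_mul (int_gH m) ((hfc.comp hu_cont).aestronglyMeasurable) (ae_of_all _ hfub)
  have hdH_split_u : ∀ n : ℕ, (fun x => dH n x * u x)
      = fun x => (α * Real.sqrt ((n : ℝ) / 2)) * (genHermite α (n - 1) x * u x)
        - (α * Real.sqrt (((n : ℝ) + 1) / 2)) * (genHermite α (n + 1) x * u x) := by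
    intro n; funext x; rw [hdH]; ring
  have hdH_split_fu : ∀ n : ℕ, (fun x => f (u x) * dH n x)
      = fun x => (α * Real.sqrt ((n : ℝ) / 2)) * (f (u x) * genHermite α (n - 1) x)
        - (α * Real.sqrt (((n : ℝ) + 1) / 2)) * (f (u x) * genHermite α (n + 1) x) := by
    intro n; funext x; rw [hdH]; ring
  have int_dHu : ∀ n : ℕ, Integrable fun x => dH n x * u x := fun n => by
    rw [hdH_split_u n]
    exact ((int_u_gH (n - 1)).const_mul _).sub ((int_u_gH (n + 1)).const_mul _)
  have int_fu_dH : ∀ n : ℕ, Integrable fun x => f (u x) * dH n x := fun n => by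
    rw [hdH_split_fu n]
    exact ((int_fu_gH (n - 1)).const_mul _).sub ((int_fu_gH (n + 1)).const_mul _)
  -- inner products with u
  have hIv : ∀ m : ℕ, ∫ x : ℝ, genHermite α m x * u x = if m ≤ N then c m else 0 := by
    intro m
    rw [hrepr m, integral_finset_sum _ (fun k _ => (int_gHmul m k).const_mul _)]
    have : ∀ k ∈ Finset.range (N + 1),
        (∫ x : ℝ, c k * (genHermite α m x * genHermite α k x))
          = if m = k then c k else 0 := by
      intro k _
      rw [integral_const_mul, genHermite_ortho α hα m k]
      by_cases h : m = k <;> simp [h]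
    rw [Finset.sum_congr rfl this, Finset.sum_ite_eq (Finset.range (N + 1)) m c]
    simp [Finset.mem_range, Nat.lt_succ_iff]
  have hdHu : ∀ n : ℕ, (∫ x : ℝ, dH n x * u x)
      = α * Real.sqrt ((n : ℝ) / 2) * (if n - 1 ≤ N then c (n - 1) else 0)
        - α * Real.sqrt (((n : ℝ) + 1) / 2) * (if n + 1 ≤ N then c (n + 1) else 0) := by
    intro n
    rw [hdH_split_u n,
      integral_sub ((int_u_gH (n - 1)).const_mul _) ((int_u_gH (n + 1)).const_mul _),
      integral_const_mul, integral_const_mul, hIv, hIv]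
  have hdHfu : ∀ n : ℕ, (∫ x : ℝ, f (u x) * dH n x)
      = α * Real.sqrt ((n : ℝ) / 2) * G (n - 1)
        - α * Real.sqrt (((n : ℝ) + 1) / 2) * G (n + 1) := by
    intro n
    rw [hdH_split_fu n,
      integral_sub ((int_fu_gH (n - 1)).const_mul _) ((int_fu_gH (n + 1)).const_mul _),
      integral_const_mul, integral_const_mul, hG]
  -- LHS
  have hGn : ∀ n : ℕ, (∫ y : ℝ, f (u y) * genHermite α n y) = G n := fun n => by rw [hG]
  have hder : ∀ x : ℝ, deriv (fun z => ∑ n ∈ Finset.range (N + 2), G n * genHermite α n z) x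
      = ∑ n ∈ Finset.range (N + 2), G n * dH n x := fun x =>
    (HasDerivAt.fun_sum fun n _ => ((hasDerivAt_genHermite α hα n x).const_mul (G n))).deriv
  have hLHS : (∫ x : ℝ, deriv (fun z => ∑ n ∈ Finset.range (N + 2),
        (∫ y : ℝ, f (u y) * genHermite α n y) * genHermite α n z) x * u x)
      = ∑ n ∈ Finset.range (N + 2), G n * ∫ x : ℝ, dH n x * u x := by
    simp_rw [hGn, hder]
    calc (∫ x : ℝ, (∑ n ∈ Finset.range (N + 2), G n * dH n x) * u x)
        = ∫ x : ℝ, ∑ n ∈ Finset.range (N + 2), G n * (dH n x * u x) := by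
          congr 1; funext x; rw [Finset.sum_mul]
          exact Finset.sum_congr rfl fun n _ => by ring
      _ = ∑ n ∈ Finset.range (N + 2), G n * ∫ x : ℝ, dH n x * u x := by
          rw [integral_finset_sum _ (fun n _ => (int_dHu n).const_mul _)]
          exact Finset.sum_congr rfl fun n _ => integral_const_mul _ _
  -- RHS: integration by parts
  have hfu_deriv : ∀ x, HasDerivAt (fun y => f (u y)) (deriv f (u x) * u' x) x := by
    intro x
    exact (((hf.differentiable one_ne_zero) (u x)).hasDerivAt).comp x (hu' x)
  have int_fu_u' : Integrable fun x => f (u x) * u' x := by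
    have h1 : (fun x => f (u x) * u' x)
        = fun x => ∑ k ∈ Finset.range (N + 1), c k * (f (u x) * dH k x) := by
      funext x; rw [hu'def, Finset.mul_sum]
      exact Finset.sum_congr rfl fun k _ => by ring
    rw [h1]
    exact integrable_finset_sum _ fun k _ => (int_fu_dH k).const_mul _
  have int_u'_u : Integrable fun x => u' x * u x := by
    have h1 : (fun x => u' x * u x)
        = fun x => ∑ k ∈ Finset.range (N + 1), c k * (dH k x * u x) := by
      funext x; rw [hu'def, Finset.sum_mul]
      exact Finset.sum_congr rfl fun k _ => by ring
    rw [h1]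
    exact integrable_finset_sum _ fun k _ => (int_dHu k).const_mul _
  have int_f'u_u'_u : Integrable fun x => deriv f (u x) * u' x * u x := by
    have h1 : (fun x => deriv f (u x) * u' x * u x)
        = fun x => deriv f (u x) * (u' x * u x) := by funext x; ring
    rw [h1]
    exact Integrable.bdd_mul int_u'_u ((hf'c.comp hu_cont).aestronglyMeasurable) (ae_of_all _ hf'ub)
  have int_fu_u : Integrable fun x => f (u x) * u x :=
    Integrable.bdd_mul int_u ((hfc.comp hu_cont).aestronglyMeasurable) (ae_of_all _ hfub)
  have hparts : (∫ x : ℝ, f (u x) * u' x) = - ∫ x : ℝ, deriv f (u x) * u' x * u x := by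
    exact integral_mul_deriv_eq_deriv_mul_of_integrable (fun x _ => hfu_deriv x) (fun x _ => hu' x) int_fu_u' int_f'u_u'_u int_fu_u
  have hderiv_u : ∀ x, deriv u x = u' x := fun x => (hu' x).deriv
  have hRHS : (∫ x : ℝ, deriv f (u x) * u x * deriv u x)
      = - ∫ x : ℝ, f (u x) * u' x := by
    rw [hparts]
    simp_rw [hderiv_u]
    rw [neg_neg]
    congr 1; funext x; ring
  have hRHS2 : (∫ x : ℝ, f (u x) * u' x)
      = ∑ k ∈ Finset.range (N + 1), c k * ∫ x : ℝ, f (u x) * dH k x := by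
    have h1 : (fun x => f (u x) * u' x)
        = fun x => ∑ k ∈ Finset.range (N + 1), c k * (f (u x) * dH k x) := by
      funext x; rw [hu'def, Finset.mul_sum]
      exact Finset.sum_congr rfl fun k _ => by ring
    rw [h1, integral_finset_sum _ (fun k _ => (int_fu_dH k).const_mul _)]
    exact Finset.sum_congr rfl fun k _ => integral_const_mul _ _
  -- final combinatorial identity
  rw [hLHS, hRHS, hRHS2]
  have hsum1 : ∀ n ∈ Finset.range (N + 2), G n * ∫ x : ℝ, dH n x * u x
      = α * Real.sqrt ((n : ℝ) / 2) * G n * c (n - 1)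
        - α * Real.sqrt (((n : ℝ) + 1) / 2) * G n * (if n + 1 ≤ N then c (n + 1) else 0) := by
    intro n hn
    rw [hdHu n, if_pos (show n - 1 ≤ N by have := Finset.mem_range.mp hn; omega)]
    ring
  rw [Finset.sum_congr rfl hsum1, Finset.sum_sub_distrib]
  have hsum2 : ∀ k ∈ Finset.range (N + 1), c k * ∫ x : ℝ, f (u x) * dH k x
      = α * Real.sqrt (((k : ℝ) + 1) / 2) * c k * G (k + 1) * (-1)
        + α * Real.sqrt ((k : ℝ) / 2) * c k * G (k - 1) := by
    intro k _
    rw [hdHfu k]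
    ring
  rw [Finset.sum_congr rfl hsum2, Finset.sum_add_distrib]
  have hA : (∑ n ∈ Finset.range (N + 2), α * Real.sqrt ((n : ℝ) / 2) * G n * c (n - 1))
      = ∑ k ∈ Finset.range (N + 1), α * Real.sqrt (((k : ℝ) + 1) / 2) * c k * G (k + 1) := by
    rw [Finset.sum_range_succ']
    simp only [Nat.cast_zero, zero_div, Real.sqrt_zero, mul_zero, zero_mul, add_zero]
    refine Finset.sum_congr rfl fun i _ => ?_
    push_cast [Nat.add_sub_cancel]
    ring
  have hB : (∑ n ∈ Finset.range (N + 2),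
        α * Real.sqrt (((n : ℝ) + 1) / 2) * G n * (if n + 1 ≤ N then c (n + 1) else 0))
      = ∑ k ∈ Finset.range (N + 1), α * Real.sqrt ((k : ℝ) / 2) * c k * G (k - 1) := by
    have hsub : Finset.range N ⊆ Finset.range (N + 2) := Finset.range_subset_range.mpr (by omega)
    have hzero : ∀ n ∈ Finset.range (N + 2), n ∉ Finset.range N →
        α * Real.sqrt (((n : ℝ) + 1) / 2) * G n * (if n + 1 ≤ N then c (n + 1) else 0) = 0 := by
      intro n _ hn
      rw [if_neg (by simp only [Finset.mem_range] at hn; omega), mul_zero]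
    rw [← Finset.sum_subset hsub hzero]
    rw [Finset.sum_range_succ' (fun k => α * Real.sqrt ((k : ℝ) / 2) * c k * G (k - 1)) N]
    simp only [Nat.cast_zero, zero_div, Real.sqrt_zero, mul_zero, zero_mul, add_zero]
    refine Finset.sum_congr rfl fun i hi => ?_
    rw [if_pos (by simp only [Finset.mem_range] at hi; omega)]
    push_cast [Nat.add_sub_cancel]
    ring
  rw [hA, hB]
  rw [neg_add, ← Finset.sum_neg_distrib]
  congr 1
  · exact Finset.sum_congr rfl fun k _ => by ring
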